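/- Let F: ℝ^d → ℝ be L-smooth relative to J_δ, i.e. F(θ') ≤ F(θ) + ⟨∇F(θ), θ' - θ⟩ + L·D_{J_δ}^v(θ', θ) for all θ' ∈ ℝ^d, θ ∈ dom(∂J), v ∈ ∂J_δ(θ). Fix θ^(k) ∈ dom(∂J) with v^(k) ∈ ∂J_δ(θ^(k)), let R select groups with P = Rᵀ, and define the coarse objective F̂(θ̂) := F(θ^(k) + P(θ̂ - Rθ^(k))). Then F̂ is L-smooth relative to the coarse regularizer Ĵ_δ. -/

import Mathlib

open RealInnerProductSpace Finset

lemma split_sum_aux {G : Type*} [Fintype G] [DecidableEq G] (S : Finset G)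
    (h : G → ℝ) (a : {g : G // g ∈ S} → ℝ) (b : G → ℝ)
    (ha : ∀ (g : G) (p : g ∈ S), h g = a ⟨g, p⟩) (hb : ∀ g ∉ S, h g = b g) :
    ∑ g, h g = ∑ g : {g : G // g ∈ S}, a g + ∑ g ∈ Sᶜ, b g := by
  rw [← Finset.sum_add_sum_compl S h]
  congr 1
  · rw [← Finset.sum_coe_sort S h]
    exact Finset.sum_congr rfl fun g _ => ha g.1 g.2
  · exact Finset.sum_congr rfl fun g hg => hb g (by simpa using hg)

/-- if `F` is `L`-smooth relative to `J_δ`, then the coarse objective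
`F̂(θ̂) := F(θ^(k) + P(θ̂ - Rθ^(k)))` is `L`-smooth relative to the coarse regularizer
`Ĵ_δ` (with gradient `∇F̂(θ̂) = R∇F(θ^(k) + P(θ̂ - Rθ^(k)))`). -/
theorem coarse_objective_relatively_smooth {G : Type*} [Fintype G] [DecidableEq G]
    (dg : G → ℕ) (Jg : (g : G) → EuclideanSpace ℝ (Fin (dg g)) → ℝ)
    (hconv : ∀ g, ConvexOn ℝ Set.univ (Jg g)) (hlsc : ∀ g, LowerSemicontinuous (Jg g))
    (δ L : ℝ) (hδ : 0 < δ) (hL : 0 < L) (S : Finset G) :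
    let E := PiLp 2 (fun g : G => EuclideanSpace ℝ (Fin (dg g)))
    let Ec := PiLp 2 (fun g : {g : G // g ∈ S} => EuclideanSpace ℝ (Fin (dg g.1)))
    let Jδ : E → ℝ := fun x => 1/(2*δ) * ‖x‖^2 + ∑ g, Jg g (x g)
    let Jδc : Ec → ℝ := fun x => 1/(2*δ) * ‖x‖^2 + ∑ g : {g : G // g ∈ S}, Jg g.1 (x g)
    let Rop : E → Ec := fun x => WithLp.toLp 2 (fun g => x g.1)
    let Pop : Ec → E := fun x => WithLp.toLp 2 (fun g => if h : g ∈ S then x ⟨g, h⟩ else 0)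
    ∀ (F : E → ℝ) (gradF : E → E), (∀ x, HasGradientAt F (gradF x) x) →
      -- `F` is `L`-smooth relative to `J_δ`:
      (∀ (θ' θ v : E), (∀ x : E, Jδ θ + ⟪v, x - θ⟫ ≤ Jδ x) →
        F θ' ≤ F θ + ⟪gradF θ, θ' - θ⟫ + L * (Jδ θ' - Jδ θ - ⟪v, θ' - θ⟫)) →
      ∀ (θk vk : E), (∀ x : E, Jδ θk + ⟪vk, x - θk⟫ ≤ Jδ x) →
      -- then `F̂` is `L`-smooth relative to `Ĵ_δ`:
      ∀ (θc' θc vc : Ec), (∀ x : Ec, Jδc θc + ⟪vc, x - θc⟫ ≤ Jδc x) →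
        F (θk + Pop (θc' - Rop θk)) ≤ F (θk + Pop (θc - Rop θk))
          + ⟪Rop (gradF (θk + Pop (θc - Rop θk))), θc' - θc⟫
          + L * (Jδc θc' - Jδc θc - ⟪vc, θc' - θc⟫) := by
  intro E Ec Jδ Jδc Rop Pop F gradF hgrad hsmooth θk vk hvk θc' θc vc hvc
  classical
  have hsubE : ∀ (a b : E) (g : G), (a - b) g = a g - b g := fun _ _ _ => rfl
  have hsubEc : ∀ (a b : Ec) (g : {g : G // g ∈ S}), (a - b) g = a g - b g := fun _ _ _ => rfl
  set φ : (g : G) → EuclideanSpace ℝ (Fin (dg g)) → ℝ :=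
    fun g y => 1/(2*δ) * ‖y‖^2 + Jg g y with hφ
  have hJδ : ∀ x : E, Jδ x = ∑ g, φ g (x g) := by
    intro x
    show 1/(2*δ) * ‖x‖^2 + ∑ g, Jg g (x g) = _
    rw [PiLp.norm_sq_eq_of_L2, Finset.mul_sum, ← Finset.sum_add_distrib]
  have hJδc : ∀ x : Ec, Jδc x = ∑ g : {g : G // g ∈ S}, φ g.1 (x g) := by
    intro x
    show 1/(2*δ) * ‖x‖^2 + _ = _
    rw [PiLp.norm_sq_eq_of_L2, Finset.mul_sum, ← Finset.sum_add_distrib]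
  set θ' : E := θk + Pop (θc' - Rop θk) with hθ'def
  set θ : E := θk + Pop (θc - Rop θk) with hθdef
  have hθS : ∀ (g : G) (p : g ∈ S), θ g = θc ⟨g, p⟩ := by
    intro g p
    show θk g + (if h : g ∈ S then (θc - Rop θk) ⟨g, h⟩ else 0) = θc ⟨g, p⟩
    rw [dif_pos p, show (θc - Rop θk) ⟨g, p⟩ = θc ⟨g, p⟩ - θk g from rfl]
    abel
  have hθO : ∀ g ∉ S, θ g = θk g := by
    intro g p
    show θk g + (if h : g ∈ S then (θc - Rop θk) ⟨g, h⟩ else 0) = θk g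
    rw [dif_neg p, add_zero]
  have hθ'S : ∀ (g : G) (p : g ∈ S), θ' g = θc' ⟨g, p⟩ := by
    intro g p
    show θk g + (if h : g ∈ S then (θc' - Rop θk) ⟨g, h⟩ else 0) = θc' ⟨g, p⟩
    rw [dif_pos p, show (θc' - Rop θk) ⟨g, p⟩ = θc' ⟨g, p⟩ - θk g from rfl]
    abel
  have hθ'O : ∀ g ∉ S, θ' g = θk g := by
    intro g p
    show θk g + (if h : g ∈ S then (θc' - Rop θk) ⟨g, h⟩ else 0) = θk g
    rw [dif_neg p, add_zero]
  set v : E := WithLp.toLp 2 (fun g => if h : g ∈ S then vc ⟨g, h⟩ else vk g) with hvdef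
  have hvS : ∀ (g : G) (p : g ∈ S), v g = vc ⟨g, p⟩ := fun g p => dif_pos p
  have hvO : ∀ g ∉ S, v g = vk g := fun g p => dif_neg p
  have hv : ∀ x : E, Jδ θ + ⟪v, x - θ⟫ ≤ Jδ x := by
    intro x
    have h1 := hvc (Rop x)
    set xO : E := WithLp.toLp 2 (fun g => if g ∈ S then θk g else x g) with hxO
    have h2 := hvk xO
    rw [hJδc, hJδc, PiLp.inner_apply] at h1
    rw [hJδ, hJδ, PiLp.inner_apply] at h2
    rw [hJδ, hJδ, PiLp.inner_apply]
    rw [split_sum_aux S (fun g => φ g (θ g)) (fun g => φ g.1 (θc g)) (fun g => φ g (θk g))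
        (fun g p => by simp [hθS g p]) (fun g p => by simp [hθO g p])]
    rw [split_sum_aux S (fun g => ⟪v g, (x - θ) g⟫)
        (fun g => ⟪vc g, x g.1 - θc g⟫) (fun g => ⟪vk g, x g - θk g⟫)
        (fun g p => by simp only [hsubE, hvS g p, hθS g p])
        (fun g p => by simp only [hsubE, hvO g p, hθO g p])]
    rw [split_sum_aux S (fun g => φ g (x g)) (fun g => φ g.1 (x g.1)) (fun g => φ g (x g))
        (fun g p => rfl) (fun g p => rfl)]
    have e2a : ∑ g : {g : G // g ∈ S}, ⟪vk g.1, (xO - θk) g.1⟫ = (0:ℝ) := by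
      apply Finset.sum_eq_zero; intro g _
      have h3 : xO g.1 = θk g.1 := if_pos g.2
      simp [hsubE, h3]
    rw [split_sum_aux S (fun g => ⟪vk g, (xO - θk) g⟫)
        (fun g => ⟪vk g.1, (xO - θk) g.1⟫) (fun g => ⟪vk g, x g - θk g⟫)
        (fun g p => rfl) (fun g p => by simp only [hsubE]; simp [hxO, p])] at h2
    rw [split_sum_aux S (fun g => φ g (xO g)) (fun g => φ g.1 (θk g.1)) (fun g => φ g (x g))
        (fun g p => by simp [hxO, p]) (fun g p => by simp [hxO, p])] at h2
    rw [split_sum_aux S (fun g => φ g (θk g)) (fun g => φ g.1 (θk g.1)) (fun g => φ g (θk g))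
        (fun g p => rfl) (fun g p => rfl)] at h2
    rw [e2a] at h2
    have h1' : ∑ g : {g : G // g ∈ S}, φ g.1 (θc g)
        + ∑ g : {g : G // g ∈ S}, ⟪vc g, x g.1 - θc g⟫
        ≤ ∑ g : {g : G // g ∈ S}, φ g.1 (x g.1) := by
      have : ∀ g : {g : G // g ∈ S}, ⟪vc g, (Rop x - θc) g⟫ = (⟪vc g, x g.1 - θc g⟫ : ℝ) :=
        fun g => rfl
      simpa [this] using h1
    linarith
  have key := hsmooth θ' θ v hv
  have e1 : ∀ w : E, ⟪w, θ' - θ⟫ = ⟪Rop w, θc' - θc⟫ := by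
    intro w
    rw [PiLp.inner_apply, PiLp.inner_apply]
    rw [split_sum_aux S (fun g => ⟪w g, (θ' - θ) g⟫)
        (fun g => (⟪(Rop w) g, (θc' - θc) g⟫ : ℝ)) (fun g => 0)
        (fun g p => by
          have h4 : (θ' - θ) g = θc' ⟨g, p⟩ - θc ⟨g, p⟩ := by
            simp only [hsubE, hθ'S g p, hθS g p]
          simp only [h4, hsubEc]; rfl)
        (fun g p => by
          have h4 : (θ' - θ) g = 0 := by
            simp only [hsubE, hθ'O g p, hθO g p, sub_self]
          simp [h4])]
    simp
  have e2 : ⟪v, θ' - θ⟫ = ⟪vc, θc' - θc⟫ := by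
    rw [PiLp.inner_apply, PiLp.inner_apply]
    rw [split_sum_aux S (fun g => ⟪v g, (θ' - θ) g⟫)
        (fun g => (⟪vc g, (θc' - θc) g⟫ : ℝ)) (fun g => 0)
        (fun g p => by
          have h4 : (θ' - θ) g = θc' ⟨g, p⟩ - θc ⟨g, p⟩ := by
            simp only [hsubE, hθ'S g p, hθS g p]
          simp only [h4, hvS g p, hsubEc])
        (fun g p => by
          have h4 : (θ' - θ) g = 0 := by
            simp only [hsubE, hθ'O g p, hθO g p, sub_self]
          simp [h4])]
    simp
  have e3 : Jδ θ' - Jδ θ = Jδc θc' - Jδc θc := by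
    rw [hJδ, hJδ, hJδc, hJδc]
    rw [split_sum_aux S (fun g => φ g (θ' g)) (fun g => φ g.1 (θc' g)) (fun g => φ g (θk g))
        (fun g p => by simp [hθ'S g p]) (fun g p => by simp [hθ'O g p])]
    rw [split_sum_aux S (fun g => φ g (θ g)) (fun g => φ g.1 (θc g)) (fun g => φ g (θk g))
        (fun g p => by simp [hθS g p]) (fun g p => by simp [hθO g p])]
    ring
  rw [e1 (gradF θ), e2, e3] at key
  exact key
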